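/- Let λ > 1, β, γ > 0, Λ, Δ > 0, and let f : ℤ_{>0} → ℝ_{>0} be monotonically increasing. Define b_k := β λ^{f(k+1)} + 1 and d_k := γ λ^{f(k)} − 1, and assume d_k > 0 for all k ≥ 1. Then for every k ≥ 1, ∏_{j=0}^{k−1} [Λ (b_{k−j} + d_{k−j}/2)^Δ]^{2^j} ≤ [Λ (β + (γ + λ^{−f(1)})/2)^Δ]^{2^k − 1} · λ^{Δ ∑_{j=0}^{k−1} f(k−j+1) 2^j}. -/
import Mathlib

/-- the algebraic product estimate: with `b_k = β λ^{f(k+1)} + 1` and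
`d_k = γ λ^{f(k)} − 1` (all `d_k > 0`), for every `k ≥ 1`,
`∏_{j=0}^{k−1} [Λ (b_{k−j} + d_{k−j}/2)^Δ]^{2^j}
  ≤ [Λ (β + (γ + λ^{−f(1)})/2)^Δ]^{2^k − 1} · λ^{Δ ∑_{j=0}^{k−1} f(k−j+1) 2^j}`. -/
theorem product_estimate (lam β γ Λ Δ : ℝ) (hlam : 1 < lam) (hβ : 0 < β) (hγ : 0 < γ)
    (hΛ : 0 < Λ) (hΔ : 0 < Δ)
    (f : ℕ → ℝ) (hfpos : ∀ k : ℕ, 1 ≤ k → 0 < f k)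
    (hfmono : ∀ j k : ℕ, 1 ≤ j → j ≤ k → f j ≤ f k)
    (b d : ℕ → ℝ)
    (hb : ∀ k : ℕ, b k = β * lam ^ f (k + 1) + 1)
    (hd : ∀ k : ℕ, d k = γ * lam ^ f k - 1)
    (hdpos : ∀ k : ℕ, 1 ≤ k → 0 < d k)
    (k : ℕ) (hk : 1 ≤ k) :
    ∏ j ∈ Finset.range k, (Λ * (b (k - j) + d (k - j) / 2) ^ Δ) ^ (2 ^ j : ℕ) ≤
      (Λ * (β + (γ + lam ^ (-f 1)) / 2) ^ Δ) ^ (2 ^ k - 1 : ℕ) *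
        lam ^ (Δ * ∑ j ∈ Finset.range k, f (k - j + 1) * 2 ^ j) := by
  have hlam0 : 0 < lam := lt_trans one_pos hlam
  set C' : ℝ := β + (γ + lam ^ (-f 1)) / 2 with hC'
  have hC'pos : 0 < C' := by
    have := Real.rpow_pos_of_pos hlam0 (-f 1)
    positivity
  set C : ℝ := Λ * C' ^ Δ with hC
  have hCpos : 0 < C := by
    have := Real.rpow_pos_of_pos hC'pos Δ
    positivity
  -- key factor bound
  have key : ∀ m : ℕ, 1 ≤ m →
      Λ * (b m + d m / 2) ^ Δ ≤ C * lam ^ (Δ * f (m + 1)) := by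
    intro m hm
    have hf1 : f 1 ≤ f (m + 1) := hfmono 1 (m + 1) le_rfl (by omega)
    have hfm : f m ≤ f (m + 1) := hfmono m (m + 1) hm (by omega)
    have hbase : b m + d m / 2 ≤ C' * lam ^ f (m + 1) := by
      rw [hb, hd, hC']
      have h1 : γ * lam ^ f m ≤ γ * lam ^ f (m + 1) :=
        mul_le_mul_of_nonneg_left (Real.rpow_le_rpow_left_iff hlam |>.mpr hfm) hγ.le
      have h2 : (1 : ℝ) ≤ lam ^ (-f 1) * lam ^ f (m + 1) := by
        rw [← Real.rpow_add hlam0]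
        exact Real.one_le_rpow hlam.le (by linarith)
      nlinarith [Real.rpow_pos_of_pos hlam0 (f (m + 1))]
    have hpos : 0 < b m + d m / 2 := by
      have h1 : 0 < b m := by
        rw [hb]; have := Real.rpow_pos_of_pos hlam0 (f (m + 1)); positivity
      have h2 := hdpos m hm
      linarith
    have : (b m + d m / 2) ^ Δ ≤ (C' * lam ^ f (m + 1)) ^ Δ :=
      Real.rpow_le_rpow hpos.le hbase hΔ.le
    calc Λ * (b m + d m / 2) ^ Δ ≤ Λ * (C' * lam ^ f (m + 1)) ^ Δ :=
          mul_le_mul_of_nonneg_left this hΛ.le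
      _ = C * lam ^ (Δ * f (m + 1)) := by
          rw [Real.mul_rpow hC'pos.le (Real.rpow_pos_of_pos hlam0 _).le,
            ← Real.rpow_mul hlam0.le, hC, mul_comm (f (m + 1)) Δ]
          ring
  -- product bound
  have step1 : ∏ j ∈ Finset.range k, (Λ * (b (k - j) + d (k - j) / 2) ^ Δ) ^ (2 ^ j : ℕ) ≤
      ∏ j ∈ Finset.range k, (C * lam ^ (Δ * f (k - j + 1))) ^ (2 ^ j : ℕ) := by
    apply Finset.prod_le_prod
    · intro j hj
      have hpos : 0 < b (k - j) + d (k - j) / 2 := by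
        have h1 : 0 < b (k - j) := by
          rw [hb]; have := Real.rpow_pos_of_pos hlam0 (f (k - j + 1)); positivity
        have h2 := hdpos (k - j) (by simp at hj; omega)
        linarith
      have := Real.rpow_pos_of_pos hpos Δ
      positivity
    · intro j hj
      simp only [Finset.mem_range] at hj
      have hpos : 0 < b (k - j) + d (k - j) / 2 := by
        have h1 : 0 < b (k - j) := by
          rw [hb]; have := Real.rpow_pos_of_pos hlam0 (f (k - j + 1)); positivity
        have h2 := hdpos (k - j) (by omega)
        linarith
      have hnn : 0 ≤ Λ * (b (k - j) + d (k - j) / 2) ^ Δ := by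
        have := Real.rpow_pos_of_pos hpos Δ; positivity
      exact pow_le_pow_left₀ hnn (key (k - j) (by omega)) _
  refine step1.trans_eq ?_
  have hsum' : ∀ n : ℕ, ∑ j ∈ Finset.range n, (2 : ℕ) ^ j = 2 ^ n - 1 := by
    intro n
    induction n with
    | zero => simp
    | succ n ih => rw [Finset.sum_range_succ, ih]; have : 1 ≤ 2 ^ n := Nat.one_le_two_pow; ring_nf; omega
  calc ∏ j ∈ Finset.range k, (C * lam ^ (Δ * f (k - j + 1))) ^ (2 ^ j : ℕ)
      = (∏ j ∈ Finset.range k, C ^ (2 ^ j : ℕ)) *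
        ∏ j ∈ Finset.range k, (lam ^ (Δ * f (k - j + 1))) ^ (2 ^ j : ℕ) := by
        rw [← Finset.prod_mul_distrib]; simp [mul_pow]
    _ = C ^ (2 ^ k - 1 : ℕ) * lam ^ (Δ * ∑ j ∈ Finset.range k, f (k - j + 1) * 2 ^ j) := by
        congr 1
        · rw [Finset.prod_pow_eq_pow_sum, hsum' k]
        · rw [Finset.mul_sum, Real.rpow_sum_of_pos hlam0]
          apply Finset.prod_congr rfl
          intro j hj
          rw [← Real.rpow_natCast (lam ^ (Δ * f (k - j + 1))) (2 ^ j), ← Real.rpow_mul hlam0.le]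
          congr 1
          push_cast
          ring
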